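/- Let d ≥ 1, let 𝒟 ⊆ ℝ^d be a convex set, let f_1,…,f_T : ℝ^d → ℝ be convex differentiable functions, let x_1,…,x_T ∈ 𝒟, set g_t = ∇f_t(x_t), let η > 0 and u ∈ 𝒟, and define ℓ_t^η(x) = −η⟨x_t − x, g_t⟩ + η²⟨x_t − x, g_t⟩². Then Σ_{t=1}^T f_t(x_t) − Σ_{t=1}^T f_t(u) ≤ (1/η) Σ_{t=1}^T (ℓ_t^η(x_t) − ℓ_t^η(u)) + η Σ_{t=1}^T ⟨g_t, x_t − u⟩², where ℓ_t^η(x_t) = 0. -/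

import Mathlib

lemma grad_ineq {d : ℕ} {f : EuclideanSpace ℝ (Fin d) → ℝ}
    (hf : ConvexOn ℝ Set.univ f) {x g u : EuclideanSpace ℝ (Fin d)}
    (hg : HasGradientAt f g x) : f x - f u ≤ (inner ℝ g (x - u) : ℝ) := by
  set φ : ℝ → ℝ := fun s => f (AffineMap.lineMap x u s) with hφ
  have hφconv : ConvexOn ℝ Set.univ φ := by
    have := hf.comp_affineMap (AffineMap.lineMap x u)
    exact this
  have hc : HasDerivAt (fun s : ℝ => AffineMap.lineMap x u s) (u - x) 0 := by
    simp only [AffineMap.lineMap_apply_module]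
    have h1 : HasDerivAt (fun s : ℝ => (1 - s) • x) ((-1 : ℝ) • x) 0 :=
      (((hasDerivAt_const (0:ℝ) (1:ℝ)).sub (hasDerivAt_id 0)).smul_const x).congr_deriv
        (by simp)
    have h2 : HasDerivAt (fun s : ℝ => s • u) ((1:ℝ) • u) 0 :=
      (hasDerivAt_id (0:ℝ)).smul_const u
    have := h1.add h2
    refine this.congr_deriv ?_
    simp only [neg_smul, one_smul]; abel

  have hfd : HasFDerivAt f (InnerProductSpace.toDual ℝ _ g) x :=
    hasGradientAt_iff_hasFDerivAt.mp hg
  have hd : HasDerivAt φ ((inner ℝ g (u - x) : ℝ)) 0 := by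
    have h0 : AffineMap.lineMap x u (0:ℝ) = x := by simp
    have := hfd.comp_hasDerivAt_of_eq (0:ℝ) hc h0.symm
    simp [InnerProductSpace.toDual_apply_apply, real_inner_comm] at this; exact this
  have hslope := hφconv.le_slope_of_hasDerivAt (Set.mem_univ (0:ℝ))
    (Set.mem_univ (1:ℝ)) one_pos hd
  have hs : slope φ 0 1 = f u - f x := by simp [slope_def_field, φ]
  rw [hs] at hslope
  have h2 : (inner ℝ g (x - u) : ℝ) = -(inner ℝ g (u - x) : ℝ) := by
    rw [← inner_neg_right]; congr 1; abel
  linarith [hslope, h2.ge]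

theorem regret_decomposition_expConcave_surrogate
    (d T : ℕ) (hd : 1 ≤ d)
    (𝒟 : Set (EuclideanSpace ℝ (Fin d))) (hconv : Convex ℝ 𝒟)
    (f : ℕ → EuclideanSpace ℝ (Fin d) → ℝ)
    (hfconv : ∀ t ∈ Finset.Icc 1 T, ConvexOn ℝ Set.univ (f t))
    (x : ℕ → EuclideanSpace ℝ (Fin d)) (hx : ∀ t ∈ Finset.Icc 1 T, x t ∈ 𝒟)
    (g : ℕ → EuclideanSpace ℝ (Fin d))
    (hgrad : ∀ t ∈ Finset.Icc 1 T, HasGradientAt (f t) (g t) (x t))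
    (η : ℝ) (hη : 0 < η)
    (u : EuclideanSpace ℝ (Fin d)) (hu : u ∈ 𝒟)
    (l : ℕ → EuclideanSpace ℝ (Fin d) → ℝ)
    (hl : ∀ t y, l t y =
      -η * (inner ℝ (x t - y) (g t) : ℝ) + η^2 * (inner ℝ (x t - y) (g t) : ℝ)^2) :
    (∑ t ∈ Finset.Icc 1 T, f t (x t)) - (∑ t ∈ Finset.Icc 1 T, f t u)
      ≤ (1 / η) * (∑ t ∈ Finset.Icc 1 T, (l t (x t) - l t u))
        + η * ∑ t ∈ Finset.Icc 1 T, (inner ℝ (g t) (x t - u) : ℝ)^2 := by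
  rw [Finset.mul_sum, Finset.mul_sum, ← Finset.sum_add_distrib, ← Finset.sum_sub_distrib]
  apply Finset.sum_le_sum
  intro t ht
  have key := grad_ineq (hfconv t ht) (u := u) (hgrad t ht)
  have ha : (inner ℝ (g t) (x t - u) : ℝ) = inner ℝ (x t - u) (g t) := real_inner_comm _ _
  set a : ℝ := (inner ℝ (x t - u) (g t) : ℝ) with haa
  have hl1 : l t (x t) = 0 := by simp [hl]
  have hl2 : l t u = -η * a + η^2 * a^2 := hl t u
  rw [hl1, hl2, ha]
  have hq : 1/η * (0 - (-η * a + η^2 * a^2)) + η * a^2 = a := by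
    field_simp; ring
  rw [hq]
  exact ha ▸ key
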